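/- In the Baumslag–Solitar group G = BS(1,4) = ⟨x, y | y x y^{-1} = x^4⟩, the subgroups H = ⟨x⟩ and K = ⟨x²⟩ satisfy: H contains a conjugate of K, and K contains a conjugate of H, but H and K are not equal (indeed not conjugate). Hence the subconjugacy preorder on subgroups of G is not antisymmetric. -/

import Mathlib

/-- The single relator `y x y⁻¹ x⁻⁴` of the Baumslag–Solitar group `BS(1,4)`,
with `x` the generator `0` and `y` the generator `1`. -/
def bsRels : Set (FreeGroup (Fin 2)) :=
  {FreeGroup.of 1 * FreeGroup.of 0 * (FreeGroup.of 1)⁻¹ * (FreeGroup.of 0 ^ 4)⁻¹}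

namespace BSAux

/-- Action of `ℚˣ` on `Multiplicative ℚ` by scaling. -/
def act : ℚˣ →* MulAut (Multiplicative ℚ) where
  toFun u := AddEquiv.toMultiplicative (DistribMulAction.toAddAut ℚˣ ℚ u)
  map_one' := by ext a; simp [DistribMulAction.toAddAut]; rfl
  map_mul' u v := by ext a; simp [DistribMulAction.toAddAut, mul_smul]; rfl

/-- The affine-type group `ℚ ⋊ ℚˣ`. -/
abbrev A := Multiplicative ℚ ⋊[act] ℚˣ

open SemidirectProduct

lemma act_apply (u : ℚˣ) (q : ℚ) :
    act u (Multiplicative.ofAdd q) = Multiplicative.ofAdd ((u : ℚ) * q) := by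
  simp [act, DistribMulAction.toAddAut, Units.smul_def, smul_eq_mul]; rfl

def four : ℚˣ := Units.mk0 4 (by norm_num)

def f : Fin 2 → A := fun i => if i = 0 then inl (Multiplicative.ofAdd (1 : ℚ)) else inr four

lemma inl_pow (q : ℚ) (n : ℤ) :
    (inl (Multiplicative.ofAdd q) : A) ^ n = inl (Multiplicative.ofAdd (n * q)) := by
  rw [← map_zpow]
  congr 1

lemma hrel : ∀ r ∈ bsRels, FreeGroup.lift f r = 1 := by
  intro r hr
  simp only [bsRels, Set.mem_singleton_iff] at hr
  subst hr
  simp only [map_mul, map_inv, map_pow, FreeGroup.lift_apply_of, f]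
  norm_num
  have h2 : (inl (Multiplicative.ofAdd (1:ℚ)) : A) ^ (4:ℕ)
      = inl (Multiplicative.ofAdd (4:ℚ)) := by
    have := inl_pow 1 4
    rw [show ((4:ℤ):ℤ) = ((4:ℕ):ℤ) from rfl, zpow_natCast] at this
    simpa using this
  rw [h2, show ((inr four : A))⁻¹ = inr four⁻¹ from (map_inv _ _).symm, ← inl_aut, act_apply]
  norm_num [four]


/-- The representation `BS(1,4) → ℚ ⋊ ℚˣ`. -/
def rep : PresentedGroup bsRels →* A := PresentedGroup.toGroup hrel

lemma rep_x : rep (PresentedGroup.of 0) = inl (Multiplicative.ofAdd (1:ℚ)) :=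
  PresentedGroup.toGroup.of hrel

lemma rep_y : rep (PresentedGroup.of 1) = inr four :=
  PresentedGroup.toGroup.of hrel


open SemidirectProduct in
lemma conj_inl (a : A) (m : Multiplicative ℚ) :
    a * inl m * a⁻¹ = inl (act a.right m) := by
  conv_lhs => rw [← inl_left_mul_inr_right a]
  calc inl a.left * inr a.right * inl m * (inl a.left * inr a.right)⁻¹
      = inl a.left * (inr a.right * inl m * inr a.right⁻¹) * inl a.left⁻¹ := by
        rw [mul_inv_rev, ← map_inv, ← map_inv]; group
    _ = inl a.left * inl (act a.right m) * inl a.left⁻¹ := by rw [← inl_aut]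
    _ = inl (a.left * act a.right m * a.left⁻¹) := by rw [← map_mul, ← map_mul]
    _ = inl (act a.right m) := by rw [mul_comm a.left, mul_inv_cancel_right]

open SemidirectProduct in
lemma slope_mem (z : PresentedGroup bsRels) :
    (rep z).right ∈ Subgroup.zpowers four := by
  have key : (⊤ : Subgroup (PresentedGroup bsRels)) ≤
      Subgroup.comap ((rightHom : A →* ℚˣ).comp rep) (Subgroup.zpowers four) := by
    rw [← PresentedGroup.closure_range_of bsRels, Subgroup.closure_le]
    rintro _ ⟨i, rfl⟩
    fin_cases i
    · simp only [Fin.zero_eta, SetLike.mem_coe, Subgroup.mem_comap, MonoidHom.comp_apply, rep_x,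
        rightHom_inl]
      exact one_mem _
    · simp only [Fin.mk_one, SetLike.mem_coe, Subgroup.mem_comap, MonoidHom.comp_apply, rep_y,
        rightHom_inr]
      exact Subgroup.mem_zpowers _
  have := key (Subgroup.mem_top z)
  simpa [Subgroup.mem_comap, rightHom] using this

lemma four_zpow_ne (k : ℤ) (c : ℚ) (hc : c = 2 ∨ c = -2) : (4:ℚ) ^ k ≠ c := by
  intro h
  have hpos : (0:ℚ) < 4 ^ k := zpow_pos (by norm_num) k
  have h2 : (4:ℚ) ^ k = 2 := by
    rcases hc with rfl | rfl
    · exact h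
    · exfalso; rw [h] at hpos; norm_num at hpos
  rcases le_or_gt k 0 with hk | hk
  · have hle : (4:ℚ) ^ k ≤ 1 := zpow_le_one_of_nonpos₀ (by norm_num) hk
    rw [h2] at hle; norm_num at hle
  · have h1 : (1:ℚ) ≤ 4 ^ (k - 1) := one_le_zpow₀ (by norm_num) (by omega)
    have h4 : (4:ℚ) ^ k = 4 * 4 ^ (k - 1) := by
      rw [show k = 1 + (k-1) by ring, zpow_add₀ (by norm_num : (4:ℚ) ≠ 0), zpow_one]
      ring_nf
    rw [h2] at h4
    nlinarith

end BSAux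


theorem stmt_8 :
    let x : PresentedGroup bsRels := PresentedGroup.of 0
    let Hs : Subgroup (PresentedGroup bsRels) := Subgroup.zpowers x
    let Ks : Subgroup (PresentedGroup bsRels) := Subgroup.zpowers (x ^ 2)
    (∃ g : PresentedGroup bsRels, ∀ k ∈ Ks, g * k * g⁻¹ ∈ Hs) ∧
    (∃ g : PresentedGroup bsRels, ∀ h ∈ Hs, g * h * g⁻¹ ∈ Ks) ∧
    Hs ≠ Ks ∧
    ¬ ∃ g : PresentedGroup bsRels, Subgroup.map (MulAut.conj g).toMonoidHom Hs = Ks := by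
  intro x Hs Ks
  -- the key relation  y * x * y⁻¹ = x ^ 4
  set y : PresentedGroup bsRels := PresentedGroup.of 1 with hy
  have hrel1 : y * x * y⁻¹ = x ^ 4 := by
    have hr : (QuotientGroup.mk (FreeGroup.of 1 * FreeGroup.of 0 * (FreeGroup.of 1)⁻¹ *
        (FreeGroup.of 0 ^ 4)⁻¹) : PresentedGroup bsRels) = 1 := by
      rw [QuotientGroup.eq_one_iff]
      exact Subgroup.subset_normalClosure (by simp [bsRels])
    simp only [QuotientGroup.mk_mul, QuotientGroup.mk_inv, QuotientGroup.mk_pow] at hr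
    have hr' : y * x * y⁻¹ * (x ^ 4)⁻¹ = 1 := hr
    exact mul_inv_eq_one.mp hr'
  refine ⟨⟨1, ?_⟩, ⟨y, ?_⟩, ?_, ?_⟩
  · intro k hk
    have hKH : Ks ≤ Hs := Subgroup.zpowers_le.mpr ⟨(2:ℕ), zpow_natCast x 2⟩
    simpa using hKH hk
  · rintro h ⟨n, rfl⟩
    refine ⟨2 * n, ?_⟩
    show (x ^ 2) ^ (2 * n) = y * x ^ n * y⁻¹
    rw [← conj_zpow, hrel1, ← zpow_natCast x 4, ← zpow_natCast x 2, ← zpow_mul, ← zpow_mul]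
    congr 1
    ring
  · -- Hs ≠ Ks
    intro hEq
    have hx : x ∈ Ks := hEq ▸ Subgroup.mem_zpowers x
    obtain ⟨n, hn⟩ := hx
    simp only at hn
    have repx : BSAux.rep x = SemidirectProduct.inl (Multiplicative.ofAdd (1:ℚ)) := BSAux.rep_x
    have := congrArg BSAux.rep hn
    simp only [map_zpow, map_pow, repx] at this
    rw [← zpow_natCast (SemidirectProduct.inl (Multiplicative.ofAdd (1:ℚ)) : BSAux.A) 2,
      ← zpow_mul, BSAux.inl_pow] at this
    have h2 : ((2 * n : ℤ) : ℚ) * 1 = 1 := by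
      have := SemidirectProduct.inl_injective this
      exact_mod_cast Multiplicative.ofAdd.injective this
    have : ((2 * n : ℤ) : ℚ) = 1 := by linarith [h2]
    have : (2 * n : ℤ) = 1 := by exact_mod_cast this
    omega
  · -- not conjugate
    rintro ⟨g, hg⟩
    have repx : BSAux.rep x = SemidirectProduct.inl (Multiplicative.ofAdd (1:ℚ)) := BSAux.rep_x
    have hmap := congrArg (Subgroup.map BSAux.rep) hg
    rw [Subgroup.map_map] at hmap
    have hcomm : BSAux.rep.comp (MulAut.conj g).toMonoidHom =
        ((MulAut.conj (BSAux.rep g)).toMonoidHom).comp BSAux.rep := by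
      ext z <;> simp [MulAut.conj_apply, map_mul, map_inv]
    rw [hcomm, ← Subgroup.map_map] at hmap
    have hHs : Subgroup.map BSAux.rep Hs =
        Subgroup.zpowers (SemidirectProduct.inl (Multiplicative.ofAdd (1:ℚ)) : BSAux.A) := by
      rw [show Hs = Subgroup.zpowers x from rfl, MonoidHom.map_zpowers, repx]
    have hx2 : BSAux.rep (x ^ 2) =
        (SemidirectProduct.inl (Multiplicative.ofAdd (2:ℚ)) : BSAux.A) := by
      rw [map_pow, repx,
        ← zpow_natCast (SemidirectProduct.inl (Multiplicative.ofAdd (1:ℚ)) : BSAux.A) 2,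
        BSAux.inl_pow]
      norm_num
    have hKs : Subgroup.map BSAux.rep Ks =
        Subgroup.zpowers (SemidirectProduct.inl (Multiplicative.ofAdd (2:ℚ)) : BSAux.A) := by
      rw [show Ks = Subgroup.zpowers (x ^ 2) from rfl, MonoidHom.map_zpowers, hx2]
    rw [hHs, hKs] at hmap
    set a : BSAux.A := BSAux.rep g with ha
    set u : ℚ := ((a.right : ℚˣ) : ℚ) with hu
    -- a * inl 1 * a⁻¹ ∈ zpowers (inl 2) gives u = 2 * m
    have h1 : (MulAut.conj a).toMonoidHom (SemidirectProduct.inl (Multiplicative.ofAdd (1:ℚ)))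
        ∈ Subgroup.zpowers (SemidirectProduct.inl (Multiplicative.ofAdd (2:ℚ)) : BSAux.A) := by
      rw [← hmap]
      exact Subgroup.mem_map_of_mem _ (Subgroup.mem_zpowers _)
    obtain ⟨m, hm⟩ := h1
    simp only at hm
    rw [BSAux.inl_pow] at hm
    have hm' : (m : ℚ) * 2 = u * 1 := by
      have : (MulAut.conj a).toMonoidHom (SemidirectProduct.inl (Multiplicative.ofAdd (1:ℚ)))
          = SemidirectProduct.inl (Multiplicative.ofAdd (u * 1)) := by
        simp only [MulEquiv.coe_toMonoidHom, MulAut.conj_apply]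
        rw [BSAux.conj_inl, BSAux.act_apply]
      rw [this] at hm
      exact_mod_cast Multiplicative.ofAdd.injective (SemidirectProduct.inl_injective hm)
    -- inl 2 ∈ image gives u * n = 2
    have h2 : (SemidirectProduct.inl (Multiplicative.ofAdd (2:ℚ)) : BSAux.A)
        ∈ Subgroup.map (MulAut.conj a).toMonoidHom
          (Subgroup.zpowers (SemidirectProduct.inl (Multiplicative.ofAdd (1:ℚ)) : BSAux.A)) := by
      rw [hmap]; exact Subgroup.mem_zpowers _
    obtain ⟨w, ⟨n, hn⟩, hw⟩ := h2
    simp only at hn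
    rw [← hn, BSAux.inl_pow] at hw
    have hw' : u * ((n : ℚ) * 1) = 2 := by
      have : (MulAut.conj a).toMonoidHom (SemidirectProduct.inl (Multiplicative.ofAdd ((n:ℚ) * 1)))
          = SemidirectProduct.inl (Multiplicative.ofAdd (u * ((n:ℚ) * 1))) := by
        simp only [MulEquiv.coe_toMonoidHom, MulAut.conj_apply]
        rw [BSAux.conj_inl, BSAux.act_apply]
      rw [this] at hw
      exact_mod_cast Multiplicative.ofAdd.injective (SemidirectProduct.inl_injective hw)
    -- hence m * n = 1 in ℤ, so u = 2 or u = -2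
    have hmn : (m : ℚ) * n = 1 := by
      have : ((m:ℚ) * 2) * ((n:ℚ) * 1) = u * ((n:ℚ) * 1) := by rw [hm']; ring
      rw [hw'] at this; linarith
    have hmnZ : m * n = 1 := by exact_mod_cast hmn
    have hu2 : u = 2 ∨ u = -2 := by
      rcases Int.isUnit_iff.mp (IsUnit.of_mul_eq_one (a := m) n hmnZ) with h | h <;>
        [left; right] <;> (subst h; push_cast at hm'; linarith)
    -- but u is a power of 4
    obtain ⟨k, hk⟩ := BSAux.slope_mem g
    have hk' : (4:ℚ) ^ k = u := by
      simp only at hk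
      have : a.right = BSAux.four ^ k := hk.symm
      rw [hu, this]
      push_cast [BSAux.four]
      norm_num
    exact BSAux.four_zpow_ne k u hu2 hk'
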